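/- Let ν ∈ (0,1), let 0 = t_0 < t_1 < ⋯ < t_N = T be an arbitrary mesh with steps τ_k = t_k − t_{k−1}, and define the L1 coefficients A^{(n)}_{n−k} = (1/τ_k) ∫_{t_{k−1}}^{t_k} (t_n − s)^{−ν}/Γ(1−ν) ds for 1 ≤ k ≤ n ≤ N. Then for every sequence V^0, V^1, …, V^N in a real inner product space and every 1 ≤ n ≤ N, ⟨∑_{k=1}^n A^{(n)}_{n−k}(V^k − V^{k−1}), V^n⟩ ≥ (1/2) ∑_{k=1}^n A^{(n)}_{n−k}(‖V^k‖² − ‖V^{k−1}‖²). -/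

import Mathlib

open MeasureTheory
open scoped RealInnerProductSpace

/-- The L1 coefficients `A^{(n)}_{n-k} = (1/τ_k) ∫_{t_{k-1}}^{t_k} (t_n - s)^{-ν}/Γ(1-ν) ds`. -/
noncomputable def L1coeff (ν : ℝ) (t : ℕ → ℝ) (n k : ℕ) : ℝ :=
  (t k - t (k - 1))⁻¹ * ∫ s in (t (k - 1))..(t k), (t n - s) ^ (-ν) / Real.Gamma (1 - ν)

private lemma abel_nonneg (a c : ℕ → ℝ) (n : ℕ) (h1 : 1 ≤ n)
    (ha : ∀ k, 1 ≤ k → k ≤ n → 0 ≤ a k)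
    (hmono : ∀ k, 1 ≤ k → k + 1 ≤ n → a k ≤ a (k + 1))
    (hc : ∀ k, 0 ≤ c k) (hcn : c n = 0) :
    0 ≤ ∑ k ∈ Finset.Icc 1 n, a k * (c (k - 1) - c k) := by
  have key : ∀ m, 1 ≤ m → m ≤ n →
      0 ≤ (∑ k ∈ Finset.Icc 1 m, a k * (c (k - 1) - c k)) + a m * c m := by
    intro m hm
    induction m, hm using Nat.le_induction with
    | base =>
      intro h
      simp only [Finset.Icc_self, Finset.sum_singleton]
      have h1' := ha 1 le_rfl h
      have h0 := hc 0
      nlinarith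
    | succ m hm ih =>
      intro hsn
      have hmn : m ≤ n := le_trans (Nat.le_succ m) hsn
      have h1' := ih hmn
      rw [Finset.sum_Icc_succ_top (by omega : 1 ≤ m + 1)]
      have h2 : a m ≤ a (m + 1) := hmono m hm hsn
      have h3 := hc m
      simp only [Nat.add_sub_cancel]
      nlinarith
  have := key n h1 le_rfl
  rw [hcn] at this
  linarith

/-- Discrete coercivity of the L1 formula (Liao–McLean–Zhang):
`⟨∑_{k=1}^n A^{(n)}_{n-k}(V^k - V^{k-1}), V^n⟩ ≥ (1/2) ∑_{k=1}^n A^{(n)}_{n-k}(‖V^k‖² - ‖V^{k-1}‖²)`. -/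
theorem L1_coercivity {H : Type*} [NormedAddCommGroup H] [InnerProductSpace ℝ H]
    (ν T : ℝ) (hν : ν ∈ Set.Ioo (0 : ℝ) 1) (N : ℕ) (hN : 0 < N)
    (t : ℕ → ℝ) (ht0 : t 0 = 0) (htN : t N = T)
    (hmono : ∀ k < N, t k < t (k + 1))
    (V : ℕ → H) (n : ℕ) (h1n : 1 ≤ n) (hnN : n ≤ N) :
    (1 / 2) * ∑ k ∈ Finset.Icc 1 n, L1coeff ν t n k * (‖V k‖ ^ 2 - ‖V (k - 1)‖ ^ 2)
      ≤ ⟪∑ k ∈ Finset.Icc 1 n, L1coeff ν t n k • (V k - V (k - 1)), V n⟫ := by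
  obtain ⟨hν0, hν1⟩ := hν
  have hΓ : 0 < Real.Gamma (1 - ν) := Real.Gamma_pos_of_pos (by linarith)
  -- strict monotonicity of the mesh
  have ht_lt : ∀ i j, i < j → j ≤ N → t i < t j := by
    have main : ∀ j, j ≤ N → ∀ i, i < j → t i < t j := by
      intro j
      induction j with
      | zero => intro _ i hi; omega
      | succ j ih =>
        intro hjN i hi
        rcases Nat.lt_succ_iff_lt_or_eq.mp hi with h | h
        · exact lt_trans (ih (by omega) i h) (hmono j (by omega))
        · subst h; exact hmono i (by omega)
    exact fun i j hij hjN => main j hjN i hij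
  have ht_le : ∀ i j, i ≤ j → j ≤ N → t i ≤ t j := by
    intro i j hij hjN
    rcases eq_or_lt_of_le hij with h | h
    · subst h; exact le_rfl
    · exact (ht_lt i j h hjN).le
  -- integrability of the kernel on any interval
  have hInt : ∀ p q : ℝ, IntervalIntegrable (fun s => (t n - s) ^ (-ν)) volume p q := by
    intro p q
    have h := (intervalIntegral.intervalIntegrable_rpow' (r := -ν) (by linarith)
      (a := t n - p) (b := t n - q)).comp_sub_left (t n)
    simpa [sub_sub_cancel] using h
  -- nonnegativity of the coefficients
  have ha_nonneg : ∀ k, 1 ≤ k → k ≤ n → 0 ≤ L1coeff ν t n k := by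
    intro k hk1 hkn
    have hτ : 0 < t k - t (k - 1) := by
      have := ht_lt (k - 1) k (by omega) (by omega)
      linarith
    have hIic : t (k - 1) ≤ t k := by linarith
    refine mul_nonneg (inv_nonneg.mpr (by linarith)) ?_
    refine intervalIntegral.integral_nonneg hIic ?_
    intro s hs
    have hsk : s ≤ t n := le_trans hs.2 (ht_le k n hkn hnN)
    exact div_nonneg (Real.rpow_nonneg (by linarith) _) hΓ.le
  -- monotonicity of the coefficients
  have ha_mono : ∀ k, 1 ≤ k → k + 1 ≤ n → L1coeff ν t n k ≤ L1coeff ν t n (k + 1) := by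
    intro k hk1 hkn
    have hτ : 0 < t k - t (k - 1) := by
      have := ht_lt (k - 1) k (by omega) (by omega)
      linarith
    have hτ' : 0 < t (k + 1) - t k := by
      have := ht_lt k (k + 1) (by omega) (by omega)
      linarith
    have hkln : t k < t n := ht_lt k n (by omega) hnN
    have hk1n : t (k + 1) ≤ t n := ht_le (k + 1) n hkn hnN
    set C : ℝ := (t n - t k) ^ (-ν) with hC
    -- upper bound for the k-th coefficient
    have hup : (∫ s in (t (k - 1))..(t k), (t n - s) ^ (-ν))
        ≤ (t k - t (k - 1)) * C := by
      have h1 : (∫ s in (t (k - 1))..(t k), (t n - s) ^ (-ν))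
          ≤ ∫ _s in (t (k - 1))..(t k), C := by
        refine intervalIntegral.integral_mono_on (by linarith) (hInt _ _)
          intervalIntegrable_const ?_
        intro s hs
        exact Real.rpow_le_rpow_of_nonpos (by linarith) (by linarith [hs.2])
          (by linarith)
      rw [intervalIntegral.integral_const] at h1
      simpa [smul_eq_mul] using h1
    -- lower bound for the (k+1)-th coefficient
    have hlow : (t (k + 1) - t k) * C
        ≤ ∫ s in (t k)..(t (k + 1)), (t n - s) ^ (-ν) := by
      have h1 : (∫ _s in (t k)..(t (k + 1)), C)
          ≤ ∫ s in (t k)..(t (k + 1)), (t n - s) ^ (-ν) := by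
        refine intervalIntegral.integral_mono_ae_restrict (by linarith)
          intervalIntegrable_const (hInt _ _) ?_
        have hne : ∀ᵐ s : ℝ ∂volume, s ≠ t n := by
          rw [MeasureTheory.ae_iff]
          simpa using Real.volume_singleton
        filter_upwards [MeasureTheory.ae_restrict_of_ae hne,
          MeasureTheory.ae_restrict_mem measurableSet_Icc] with s hsne hs
        have hs1 : t k ≤ s := hs.1
        have hs2 : s < t n := lt_of_le_of_ne (le_trans hs.2 hk1n) hsne
        exact Real.rpow_le_rpow_of_nonpos (by linarith) (by linarith) (by linarith)
      rw [intervalIntegral.integral_const] at h1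
      simpa using h1
    -- combine
    have hkey : L1coeff ν t n k ≤ C / Real.Gamma (1 - ν) := by
      unfold L1coeff
      rw [intervalIntegral.integral_div]
      rw [inv_mul_le_iff₀ hτ]
      calc (∫ s in (t (k - 1))..(t k), (t n - s) ^ (-ν)) / Real.Gamma (1 - ν)
          ≤ ((t k - t (k - 1)) * C) / Real.Gamma (1 - ν) := by gcongr
        _ = (t k - t (k - 1)) * (C / Real.Gamma (1 - ν)) := by ring
    have hkey' : C / Real.Gamma (1 - ν) ≤ L1coeff ν t n (k + 1) := by
      unfold L1coeff
      simp only [Nat.add_sub_cancel]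
      rw [intervalIntegral.integral_div]
      rw [le_inv_mul_iff₀ hτ']
      calc (t (k + 1) - t k) * (C / Real.Gamma (1 - ν))
          = ((t (k + 1) - t k) * C) / Real.Gamma (1 - ν) := by ring
        _ ≤ (∫ s in (t k)..(t (k + 1)), (t n - s) ^ (-ν)) / Real.Gamma (1 - ν) := by gcongr
    exact le_trans hkey hkey'
  -- the algebraic part
  set c : ℕ → ℝ := fun j => ‖V n - V j‖ ^ 2 with hcdef
  have hc : ∀ j, 0 ≤ c j := fun j => by positivity
  have hcn : c n = 0 := by simp [hcdef]
  have habel : 0 ≤ ∑ k ∈ Finset.Icc 1 n, L1coeff ν t n k * (c (k - 1) - c k) :=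
    abel_nonneg _ _ n h1n ha_nonneg ha_mono hc hcn
  have hterm : ∀ k, L1coeff ν t n k * ⟪V k - V (k - 1), V n⟫
      = L1coeff ν t n k * (‖V k‖ ^ 2 - ‖V (k - 1)‖ ^ 2) / 2
        + L1coeff ν t n k * (c (k - 1) - c k) / 2 := by
    intro k
    have key : ⟪V k - V (k - 1), V n⟫
        = (1 / 2) * (‖V k‖ ^ 2 - ‖V (k - 1)‖ ^ 2)
          + (1 / 2) * (c (k - 1) - c k) := by
      simp only [hcdef]
      rw [inner_sub_left, norm_sub_sq_real, norm_sub_sq_real,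
        real_inner_comm (V n) (V (k - 1)), real_inner_comm (V n) (V k)]
      ring
    rw [key]; ring
  rw [sum_inner]
  simp only [real_inner_smul_left]
  rw [Finset.sum_congr rfl (fun k _ => hterm k), Finset.sum_add_distrib,
    ← Finset.sum_div, ← Finset.sum_div]
  linarith
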